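/- Let N ~ N(0,1) with density φ and let X be any real random variable. If E[f'(X) − X·f(X)] = 0 for every absolutely continuous f : ℝ → ℝ with E|f'(N)| < ∞, then X has the standard Gaussian distribution. -/

import Mathlib

open MeasureTheory ProbabilityTheory Real Set Filter Topology NNReal ENNReal

noncomputable def steinφ (y : ℝ) : ℝ := Real.exp (-(y^2/2))

lemma steinφ_pos (y : ℝ) : 0 < steinφ y := Real.exp_pos _

lemma steinφ_cont : Continuous steinφ := by
  unfold steinφ; fun_prop

lemma steinφ_integrable : Integrable steinφ := by
  have h := integrable_exp_neg_mul_sq (b := (2:ℝ)⁻¹) (by norm_num)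
  have : steinφ = fun y : ℝ => Real.exp (-2⁻¹ * y^2) := by
    funext y; unfold steinφ; ring_nf
  rw [this]; exact h

lemma stein_yφ_integrable : Integrable (fun y : ℝ => y * steinφ y) := by
  have h := integrable_rpow_mul_exp_neg_mul_sq (b := (2:ℝ)⁻¹) (by norm_num) (s := 1) (by norm_num)
  have : (fun y : ℝ => y * steinφ y) = fun y : ℝ => y ^ (1:ℝ) * Real.exp (-2⁻¹ * y^2) := by
    funext y; rw [Real.rpow_one]; unfold steinφ; ring_nf
  rw [this]; exact h

lemma steinφ_hasDeriv (y : ℝ) : HasDerivAt steinφ (-y * steinφ y) y := by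
  have h1 : HasDerivAt (fun y : ℝ => -(y^2/2)) (-y) y := by
    have := ((hasDerivAt_pow 2 y).div_const 2).fun_neg
    simpa using this
  unfold steinφ; simpa [mul_comm] using h1.exp

lemma stein_sq_tendsto : Tendsto (fun y : ℝ => y^2) atTop atTop := by
  simpa using tendsto_pow_atTop (n := 2) (by norm_num)

lemma steinφ_tendsto_atTop : Tendsto steinφ atTop (𝓝 0) := by
  apply Real.tendsto_exp_atBot.comp
  exact tendsto_neg_atTop_atBot.comp (stein_sq_tendsto.atTop_div_const (by norm_num))

lemma steinφ_tendsto_atBot : Tendsto steinφ atBot (𝓝 0) := by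
  apply Real.tendsto_exp_atBot.comp
  apply tendsto_neg_atTop_atBot.comp
  apply Tendsto.atTop_div_const (by norm_num)
  have : (fun y : ℝ => y^2) = (fun z : ℝ => z^2) ∘ Neg.neg := by
    funext y; simp [Function.comp]
  rw [this]
  exact stein_sq_tendsto.comp tendsto_neg_atBot_atTop

lemma stein_integral_neg_y_φ_Iic (x : ℝ) :
    ∫ y in Iic x, (-y) * steinφ y = steinφ x := by
  have h := integral_Iic_of_hasDerivAt_of_tendsto' (a := x) (f := steinφ)
    (f' := fun y => -y * steinφ y) (fun y _ => steinφ_hasDeriv y)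
    ((stein_yφ_integrable.neg.congr (by filter_upwards with y; simp)).integrableOn)
    steinφ_tendsto_atBot
  simpa using h

lemma stein_integral_y_φ_Ioi (x : ℝ) :
    ∫ y in Ioi x, y * steinφ y = steinφ x := by
  have h := integral_Ioi_of_hasDerivAt_of_tendsto' (a := x) (f := fun y => -steinφ y)
    (f' := fun y => y * steinφ y)
    (fun y _ => by simpa [neg_mul, neg_neg] using (steinφ_hasDeriv y).fun_neg)
    (stein_yφ_integrable.integrableOn) (steinφ_tendsto_atTop.neg)
  simpa using h

lemma stein_neg_yφ_integrable : Integrable (fun y : ℝ => -y * steinφ y) :=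
  stein_yφ_integrable.neg.congr (by filter_upwards with y; simp)

lemma stein_mills_Iic {x : ℝ} (hx : x < 0) :
    ∫ y in Iic x, steinφ y ≤ steinφ x / (-x) := by
  have h1 : ∫ y in Iic x, steinφ y ≤ ∫ y in Iic x, (-y) * steinφ y / (-x) := by
    apply setIntegral_mono_on steinφ_integrable.integrableOn
      ((stein_neg_yφ_integrable.div_const _).integrableOn) measurableSet_Iic
    intro y hy
    have hy' : y ≤ x := mem_Iic.mp hy
    rw [le_div_iff₀ (by linarith)]
    nlinarith [steinφ_pos y]
  rwa [integral_div, stein_integral_neg_y_φ_Iic] at h1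

lemma stein_mills_Ioi {x : ℝ} (hx : 0 < x) :
    ∫ y in Ioi x, steinφ y ≤ steinφ x / x := by
  have h1 : ∫ y in Ioi x, steinφ y ≤ ∫ y in Ioi x, y * steinφ y / x := by
    apply setIntegral_mono_on steinφ_integrable.integrableOn
      ((stein_yφ_integrable.div_const _).integrableOn) measurableSet_Ioi
    intro y hy
    have hy' : x < y := mem_Ioi.mp hy
    rw [le_div_iff₀ hx]
    nlinarith [steinφ_pos y]
  rwa [integral_div, stein_integral_y_φ_Ioi] at h1

lemma stein_pdf_eq (y : ℝ) :
    gaussianPDFReal 0 1 y = (Real.sqrt (2*π))⁻¹ * steinφ y := by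
  unfold gaussianPDFReal steinφ
  push_cast
  ring_nf

lemma stein_integral_gaussian (g : ℝ → ℝ) :
    ∫ y, g y ∂(gaussianReal 0 1) = (Real.sqrt (2*π))⁻¹ * ∫ y, g y * steinφ y := by
  rw [gaussianReal_of_var_ne_zero _ one_ne_zero]
  have hpdf : gaussianPDF 0 1 = fun y => ((Real.toNNReal (gaussianPDFReal 0 1 y) : ℝ≥0) : ℝ≥0∞) :=
    rfl
  rw [hpdf, integral_withDensity_eq_integral_smul
    ((measurable_gaussianPDFReal 0 1).real_toNNReal) g]
  have : (fun y => Real.toNNReal (gaussianPDFReal 0 1 y) • g y)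
      = fun y => (Real.sqrt (2*π))⁻¹ * (g y * steinφ y) := by
    funext y
    rw [NNReal.smul_def, smul_eq_mul, Real.coe_toNNReal _ (gaussianPDFReal_nonneg 0 1 y),
      stein_pdf_eq]
    ring
  rw [this, MeasureTheory.integral_const_mul]

lemma steinφ_def (y : ℝ) : steinφ y = Real.exp (-(y^2/2)) := rfl

noncomputable def steinΦ (g : ℝ → ℝ) (x : ℝ) : ℝ := ∫ y in Iic x, g y * steinφ y

noncomputable def steinSol (g : ℝ → ℝ) (x : ℝ) : ℝ := Real.exp (x^2/2) * steinΦ g x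

variable {g : ℝ → ℝ} {M' : ℝ}

lemma stein_k_integrable (hgc : Continuous g) (hg : ∀ x, |g x| ≤ M') :
    Integrable (fun y => g y * steinφ y) := by
  apply Integrable.mono' (steinφ_integrable.const_mul M')
    (hgc.mul steinφ_cont).aestronglyMeasurable
  filter_upwards with y
  rw [Pi.mul_apply, norm_mul, Real.norm_eq_abs, Real.norm_eq_abs, abs_of_pos (steinφ_pos y)]
  exact mul_le_mul_of_nonneg_right (hg y) (steinφ_pos y).le

lemma steinΦ_hasDeriv (hgc : Continuous g) (hg : ∀ x, |g x| ≤ M') (x : ℝ) :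
    HasDerivAt (steinΦ g) (g x * steinφ x) x := by
  have hk := stein_k_integrable hgc hg
  have hkc : Continuous (fun y => g y * steinφ y) := hgc.mul steinφ_cont
  have heq : steinΦ g = fun t => (∫ y in Iic (0:ℝ), g y * steinφ y) +
      ∫ y in (0:ℝ)..t, g y * steinφ y := by
    funext t
    have := intervalIntegral.integral_Iic_sub_Iic (hk.integrableOn (s := Iic (0:ℝ)))
      (hk.integrableOn (s := Iic t))
    rw [← this]
    simp [steinΦ]
  rw [heq]
  exact ((intervalIntegral.integral_hasDerivAt_right (hkc.intervalIntegrable _ _)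
    hkc.stronglyMeasurable.stronglyMeasurableAtFilter hkc.continuousAt).const_add _)

lemma steinSol_hasDeriv (hgc : Continuous g) (hg : ∀ x, |g x| ≤ M') (x : ℝ) :
    HasDerivAt (steinSol g) (x * steinSol g x + g x) x := by
  have h1 : HasDerivAt (fun x : ℝ => Real.exp (x^2/2)) (x * Real.exp (x^2/2)) x := by
    have h2 : HasDerivAt (fun x : ℝ => x^2/2) x x := by
      simpa using (hasDerivAt_pow 2 x).div_const 2
    simpa [mul_comm] using h2.exp
  have := h1.mul (steinΦ_hasDeriv hgc hg x)
  refine HasDerivAt.congr_deriv this ?_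
  have hexp : Real.exp (x^2/2) * steinφ x = 1 := by
    rw [steinφ_def, ← Real.exp_add]; simp
  unfold steinSol
  linear_combination (g x) * hexp

lemma steinSol_bound (hgc : Continuous g) (hg : ∀ x, |g x| ≤ M')
    (htot : ∫ y, g y * steinφ y = 0) (x : ℝ) :
    |x * steinSol g x| ≤ M' := by
  have hM' : 0 ≤ M' := le_trans (abs_nonneg _) (hg 0)
  have hk := stein_k_integrable hgc hg
  have hexp : Real.exp (x^2/2) * steinφ x = 1 := by
    rw [steinφ_def, ← Real.exp_add]; simp
  have habs : ∀ s : Set ℝ, MeasurableSet s → |∫ y in s, g y * steinφ y| ≤ M' * ∫ y in s, steinφ y := by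
    intro s hs
    calc |∫ y in s, g y * steinφ y| ≤ ∫ y in s, |g y * steinφ y| := by
          simpa only [Real.norm_eq_abs] using
            norm_integral_le_integral_norm (μ := volume.restrict s) (fun y => g y * steinφ y)
      _ ≤ ∫ y in s, M' * steinφ y := by
          apply setIntegral_mono_on (hk.integrableOn.abs)
            ((steinφ_integrable.const_mul M').integrableOn) hs
          intro y _
          rw [abs_mul, abs_of_pos (steinφ_pos y)]
          exact mul_le_mul_of_nonneg_right (hg y) (steinφ_pos y).le
      _ = M' * ∫ y in s, steinφ y := by rw [MeasureTheory.integral_const_mul]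
  rcases lt_trichotomy x 0 with hx | hx | hx
  · have hb : |steinΦ g x| ≤ M' * (steinφ x / (-x)) := by
      refine le_trans (habs _ measurableSet_Iic) ?_
      exact mul_le_mul_of_nonneg_left (stein_mills_Iic hx) hM'
    have : |x * steinSol g x| = Real.exp (x^2/2) * ((-x) * |steinΦ g x|) := by
      unfold steinSol
      rw [abs_mul, abs_mul, abs_of_pos (Real.exp_pos _), abs_of_neg hx]
      ring
    rw [this]
    calc Real.exp (x^2/2) * ((-x) * |steinΦ g x|)
        ≤ Real.exp (x^2/2) * ((-x) * (M' * (steinφ x / (-x)))) := by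
          apply mul_le_mul_of_nonneg_left _ (Real.exp_pos _).le
          exact mul_le_mul_of_nonneg_left hb (by linarith)
      _ = M' * (Real.exp (x^2/2) * steinφ x) := by
          have hne : x ≠ 0 := ne_of_lt hx
          field_simp
      _ = M' := by rw [hexp, mul_one]
  · simp [hx, hM']
  · have hΦ : steinΦ g x = -∫ y in Ioi x, g y * steinφ y := by
      have h3 := integral_add_compl (measurableSet_Iic (a := x)) hk
      rw [compl_Iic, htot] at h3
      unfold steinΦ
      linarith
    have hb : |steinΦ g x| ≤ M' * (steinφ x / x) := by
      rw [hΦ, abs_neg]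
      refine le_trans (habs _ measurableSet_Ioi) ?_
      exact mul_le_mul_of_nonneg_left (stein_mills_Ioi hx) hM'
    have : |x * steinSol g x| = Real.exp (x^2/2) * (x * |steinΦ g x|) := by
      unfold steinSol
      rw [abs_mul, abs_mul, abs_of_pos (Real.exp_pos _), abs_of_pos hx]
      ring
    rw [this]
    calc Real.exp (x^2/2) * (x * |steinΦ g x|)
        ≤ Real.exp (x^2/2) * (x * (M' * (steinφ x / x))) := by
          apply mul_le_mul_of_nonneg_left _ (Real.exp_pos _).le
          exact mul_le_mul_of_nonneg_left hb (by linarith)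
      _ = M' * (Real.exp (x^2/2) * steinφ x) := by
          have hne : x ≠ 0 := ne_of_gt hx
          field_simp
      _ = M' := by rw [hexp, mul_one]

lemma stein_key {Ω : Type*} [MeasurableSpace Ω] (P : Measure Ω) [IsProbabilityMeasure P]
    (X : Ω → ℝ) (hX : Measurable X)
    (hstein : ∀ f f' : ℝ → ℝ, (∀ x, HasDerivAt f (f' x) x) →
      Integrable f' (gaussianReal 0 1) →
      Integrable (fun ω => f' (X ω) - X ω * f (X ω)) P →
      ∫ ω, (f' (X ω) - X ω * f (X ω)) ∂P = 0)
    (h : ℝ → ℝ) (hcont : Continuous h) (M : ℝ) (hM : ∀ x, |h x| ≤ M) :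
    ∫ ω, h (X ω) ∂P = ∫ x, h x ∂(gaussianReal 0 1) := by
  set c : ℝ := ∫ x, h x ∂(gaussianReal 0 1) with hc
  set g : ℝ → ℝ := fun x => h x - c with hgdef
  have hgc : Continuous g := hcont.sub continuous_const
  have hg : ∀ x, |g x| ≤ M + |c| := by
    intro x
    have h1 : |h x - c| ≤ |h x| + |c| := by
      have := abs_add_le (h x) (-c)
      simpa [sub_eq_add_neg] using this
    have := hM x
    simp only [hgdef]
    linarith
  have hhintγ : Integrable h (gaussianReal 0 1) := by
    apply Integrable.mono' (integrable_const M) hcont.aestronglyMeasurable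
    filter_upwards with y using by simpa [Real.norm_eq_abs] using hM y
  have hgγ : ∫ y, g y ∂(gaussianReal 0 1) = 0 := by
    simp only [hgdef]
    rw [integral_sub hhintγ (integrable_const c)]
    simp [hc]
  have htot : ∫ y, g y * steinφ y = 0 := by
    have h2 := stein_integral_gaussian g
    rw [hgγ] at h2
    have hs : (Real.sqrt (2*π))⁻¹ ≠ 0 := by
      simp [Real.sqrt_eq_zero', Real.pi_pos.le]
    rcases mul_eq_zero.mp h2.symm with h3 | h3
    · exact absurd h3 hs
    · exact h3
  set f : ℝ → ℝ := steinSol g with hf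
  set f' : ℝ → ℝ := fun x => x * f x + g x with hf'
  have hfd : ∀ x, HasDerivAt f (f' x) x := fun x => steinSol_hasDeriv hgc hg x
  have hbound := steinSol_bound hgc hg htot
  have hfc : Continuous f := by
    rw [continuous_iff_continuousAt]; exact fun x => (hfd x).continuousAt
  have hf'c : Continuous f' := (continuous_id.mul hfc).add hgc
  have hf'int : Integrable f' (gaussianReal 0 1) := by
    apply Integrable.mono' (integrable_const ((M + |c|) + (M + |c|))) hf'c.aestronglyMeasurable
    filter_upwards with x
    rw [Real.norm_eq_abs]
    simp only [hf']
    calc |x * f x + g x| ≤ |x * f x| + |g x| := abs_add_le _ _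
      _ ≤ (M + |c|) + (M + |c|) := add_le_add (hbound x) (hg x)
  have hPeq : (fun ω => f' (X ω) - X ω * f (X ω)) = fun ω => g (X ω) := by
    funext ω; simp only [hf']; ring
  have hPint : Integrable (fun ω => f' (X ω) - X ω * f (X ω)) P := by
    rw [hPeq]
    apply Integrable.mono' (integrable_const (M + |c|))
      ((hgc.measurable.comp hX).aestronglyMeasurable)
    filter_upwards with ω using by simpa [Real.norm_eq_abs] using hg (X ω)
  have h0 := hstein f f' hfd hf'int hPint
  rw [hPeq] at h0
  have hhint : Integrable (fun ω => h (X ω)) P := by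
    apply Integrable.mono' (integrable_const M) ((hcont.measurable.comp hX).aestronglyMeasurable)
    filter_upwards with ω using by simpa [Real.norm_eq_abs] using hM (X ω)
  simp only [hgdef] at h0
  rw [integral_sub hhint (integrable_const c)] at h0
  simp at h0
  linarith

theorem stein_characterization_of_gaussian
    {Ω : Type*} [MeasurableSpace Ω] (P : Measure Ω) [IsProbabilityMeasure P]
    (X : Ω → ℝ) (hX : Measurable X)
    (hstein : ∀ f f' : ℝ → ℝ, (∀ x, HasDerivAt f (f' x) x) →
      Integrable f' (gaussianReal 0 1) →
      Integrable (fun ω => f' (X ω) - X ω * f (X ω)) P →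
      ∫ ω, (f' (X ω) - X ω * f (X ω)) ∂P = 0) :
    Measure.map X P = gaussianReal 0 1 := by
  have hmap : IsProbabilityMeasure (Measure.map X P) := Measure.isProbabilityMeasure_map hX.aemeasurable
  refine ext_of_forall_lintegral_eq_of_IsFiniteMeasure ?_
  intro f
  have hfc : Continuous fun x : ℝ => ((f x : ℝ≥0) : ℝ) := NNReal.continuous_coe.comp f.continuous
  obtain ⟨C, hC⟩ := f.bounded
  have hbd : ∀ x : ℝ, |((f x : ℝ≥0) : ℝ)| ≤ ((f 0 : ℝ≥0) : ℝ) + C := by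
    intro x
    rw [abs_of_nonneg (f x).coe_nonneg]
    have h1 := hC x 0
    rw [NNReal.dist_eq] at h1
    have h2 : ((f x : ℝ≥0) : ℝ) - ((f 0 : ℝ≥0) : ℝ) ≤ |((f x : ℝ≥0) : ℝ) - ((f 0 : ℝ≥0) : ℝ)| :=
      le_abs_self _
    linarith
  have hkey := stein_key P X hX hstein _ hfc _ hbd
  have hint : ∀ (μ : Measure ℝ) [IsProbabilityMeasure μ],
      Integrable (fun x => ((f x : ℝ≥0) : ℝ)) μ := by
    intro μ _
    apply Integrable.mono' (integrable_const (((f 0 : ℝ≥0) : ℝ) + C)) hfc.aestronglyMeasurable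
    filter_upwards with x using by simpa [Real.norm_eq_abs] using hbd x
  rw [lintegral_coe_eq_integral _ (hint (Measure.map X P)),
    lintegral_coe_eq_integral _ (hint (gaussianReal 0 1))]
  congr 1
  rw [integral_map hX.aemeasurable hfc.aestronglyMeasurable]
  exact hkey
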